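/- Let θ̂ be the minimum ℓ₁-norm interpolator of (X, y) with X full row rank, and let δ̄ = 1/(n‖α̂‖_∞) with α̂ the dual optimum. Then for any test distribution, √(R^adv_*(θ̂; δ_test, ‖·‖_∞)) - √(R_*(θ̂)) ≤ √p · (δ_test/δ̄) · √(R^adv(θ̂; δ̄, ‖·‖_2)), where R^adv(θ̂; δ̄, ‖·‖_2) is the empirical ℓ₂-adversarial risk. -/

import Mathlib

open Matrix MeasureTheory

/-- The ℓ₁-norm of a vector in `ℝ^m`. -/
noncomputable def l1norm {m : ℕ} (v : Fin m → ℝ) : ℝ := ∑ i, |v i|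

/-- The ℓ₂-norm of a vector in `ℝ^m`. -/
noncomputable def l2norm {m : ℕ} (v : Fin m → ℝ) : ℝ := Real.sqrt (∑ i, v i ^ 2)

/-- The ℓ₂-adversarial training risk `(1/n) ∑ᵢ (|yᵢ - xᵢᵀθ| + δ‖θ‖₂)²`
(the ℓ₂-norm is its own dual). -/
noncomputable def advRiskL2 {n p : ℕ} (X : Matrix (Fin n) (Fin p) ℝ) (y : Fin n → ℝ)
    (δ : ℝ) (θ : Fin p → ℝ) : ℝ :=
  (1 / n : ℝ) * ∑ i, (|y i - X i ⬝ᵥ θ| + δ * l2norm θ) ^ 2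

lemma l1norm_nonneg {m : ℕ} (v : Fin m → ℝ) : 0 ≤ l1norm v :=
  Finset.sum_nonneg fun i _ => abs_nonneg _

lemma l2norm_nonneg {m : ℕ} (v : Fin m → ℝ) : 0 ≤ l2norm v := Real.sqrt_nonneg _

lemma l1_le_sqrt_mul_l2 {m : ℕ} (v : Fin m → ℝ) :
    l1norm v ≤ Real.sqrt m * l2norm v := by
  rw [l2norm, ← Real.sqrt_mul (by positivity)]
  rw [Real.le_sqrt (l1norm_nonneg v) (by positivity)]
  have := sq_sum_le_card_mul_sum_sq (s := (Finset.univ : Finset (Fin m)))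
    (f := fun i => |v i|)
  simpa [l1norm, sq_abs] using this

/-- Pointwise value of the adversarial sup. -/
lemma sup_eq {p : ℕ} (θ : Fin p → ℝ) (δ : ℝ) (hδ : 0 < δ) (x : Fin p → ℝ) (b : ℝ) :
    sSup {v | ∃ Δx : Fin p → ℝ, ‖Δx‖ ≤ δ ∧ v = (b - (x + Δx) ⬝ᵥ θ) ^ 2}
      = (|b - x ⬝ᵥ θ| + δ * l1norm θ) ^ 2 := by
  set g := b - x ⬝ᵥ θ with hg
  set c := δ * l1norm θ with hc
  have hc0 : 0 ≤ c := mul_nonneg hδ.le (l1norm_nonneg θ)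
  apply IsGreatest.csSup_eq
  constructor
  · -- membership
    set s : ℝ := if 0 ≤ g then -δ else δ with hs
    refine ⟨fun i => s * (if 0 ≤ θ i then 1 else -1), ?_, ?_⟩
    · rw [pi_norm_le_iff_of_nonneg hδ.le]
      intro i
      have : |s| = δ := by rw [hs]; split <;> simp [abs_of_pos hδ]
      rw [Real.norm_eq_abs, abs_mul, this]
      split <;> simp
    · have hdot : (fun i => s * (if 0 ≤ θ i then 1 else -1)) ⬝ᵥ θ = s * l1norm θ := by
        rw [dotProduct, l1norm, Finset.mul_sum]
        refine Finset.sum_congr rfl fun i _ => ?_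
        rcases le_or_gt 0 (θ i) with h | h
        · rw [if_pos h, abs_of_nonneg h]; ring
        · rw [if_neg (not_le.mpr h), abs_of_neg h]; ring
      have hx : b - (x + (fun i => s * (if 0 ≤ θ i then 1 else -1))) ⬝ᵥ θ
          = g - s * l1norm θ := by
        rw [add_dotProduct, hdot, hg]; ring
      rw [hx, hs]
      rcases le_or_gt 0 g with h | h
      · rw [if_pos h, abs_of_nonneg h, hc]; ring
      · rw [if_neg (not_le.mpr h), abs_of_neg h, hc]; ring
  · -- upper bound
    rintro v ⟨Δx, hΔ, rfl⟩
    have hd : |Δx ⬝ᵥ θ| ≤ c := by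
      rw [dotProduct, hc, l1norm, Finset.mul_sum]
      refine (Finset.abs_sum_le_sum_abs _ _).trans (Finset.sum_le_sum fun i _ => ?_)
      rw [abs_mul]
      exact mul_le_mul_of_nonneg_right
        ((norm_le_pi_norm Δx i).trans hΔ) (abs_nonneg _)
    have h1 : b - (x + Δx) ⬝ᵥ θ = g - Δx ⬝ᵥ θ := by
      rw [add_dotProduct, hg]; ring
    rw [h1]
    have habs : |g - Δx ⬝ᵥ θ| ≤ |g| + c :=
      (abs_sub (g) (Δx ⬝ᵥ θ)).trans (by linarith)
    calc (g - Δx ⬝ᵥ θ) ^ 2 = |g - Δx ⬝ᵥ θ| ^ 2 := (sq_abs _).symm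
      _ ≤ (|g| + c) ^ 2 := by
          apply pow_le_pow_left₀ (abs_nonneg _) habs

/-- Jensen/Cauchy–Schwarz: for a probability measure, `∫|g| ≤ √(∫ g²)`. -/
lemma int_abs_le_sqrt_int_sq {Ω : Type*} [MeasurableSpace Ω] (μ : Measure Ω)
    [IsProbabilityMeasure μ] (g : Ω → ℝ)
    (hg : Integrable (fun ω => (g ω) ^ 2) μ) (hg1 : Integrable (fun ω => |g ω|) μ) :
    ∫ ω, |g ω| ∂μ ≤ Real.sqrt (∫ ω, (g ω) ^ 2 ∂μ) := by
  set m := ∫ ω, |g ω| ∂μ with hm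
  have hm0 : 0 ≤ m := integral_nonneg fun ω => abs_nonneg _
  have hI0 : 0 ≤ ∫ ω, (g ω) ^ 2 ∂μ := integral_nonneg fun ω => sq_nonneg _
  rw [Real.le_sqrt hm0 hI0]
  have key : 0 ≤ ∫ ω, (|g ω| - m) ^ 2 ∂μ := integral_nonneg fun ω => sq_nonneg _
  have hexp : (fun ω => (|g ω| - m) ^ 2)
      = fun ω => (g ω) ^ 2 - 2 * m * |g ω| + m ^ 2 := by
    funext ω; rw [sub_sq, sq_abs]; ring
  rw [hexp] at key
  have int2 : Integrable (fun ω => 2 * m * |g ω|) μ := hg1.const_mul _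
  have int1 : Integrable (fun ω => (g ω) ^ 2 - 2 * m * |g ω|) μ := hg.sub int2
  rw [integral_add int1 (integrable_const _), integral_sub hg int2,
    integral_const, integral_const_mul] at key
  simp only [probReal_univ, ENNReal.toReal_one, one_smul, ← hm] at key
  nlinarith

theorem stmt10 {n p : ℕ} (hn : 0 < n)
    (X : Matrix (Fin n) (Fin p) ℝ) (y : Fin n → ℝ)
    (hrank : X.rank = n)
    -- θh is the minimum ℓ₁-norm interpolator
    (θh : Fin p → ℝ) (hθh_feas : X *ᵥ θh = y)
    (hθh_opt : ∀ θ : Fin p → ℝ, X *ᵥ θ = y → l1norm θh ≤ l1norm θ)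
    -- α̂ is the dual optimum: maximize αᵀy subject to ‖αᵀX‖_∞ ≤ 1
    (αh : Fin n → ℝ) (hαh_feas : ‖αh ᵥ* X‖ ≤ 1)
    (hαh_opt : ∀ α : Fin n → ℝ, ‖α ᵥ* X‖ ≤ 1 → α ⬝ᵥ y ≤ αh ⬝ᵥ y)
    (δbar : ℝ) (hδbar : δbar = 1 / (n * ‖αh‖))
    (δtest : ℝ) (hδtest : 0 < δtest)
    {Ω : Type*} [MeasurableSpace Ω] (μ : Measure Ω) [IsProbabilityMeasure μ]
    (x0 : Ω → Fin p → ℝ) (y0 : Ω → ℝ)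
    (hg : Integrable (fun ω => (y0 ω - x0 ω ⬝ᵥ θh) ^ 2) μ)
    (hg1 : Integrable (fun ω => |y0 ω - x0 ω ⬝ᵥ θh|) μ)
    (hf : Integrable (fun ω =>
      sSup {v | ∃ Δx : Fin p → ℝ, ‖Δx‖ ≤ δtest ∧ v = (y0 ω - (x0 ω + Δx) ⬝ᵥ θh) ^ 2}) μ) :
    Real.sqrt (∫ ω,
        sSup {v | ∃ Δx : Fin p → ℝ, ‖Δx‖ ≤ δtest ∧ v = (y0 ω - (x0 ω + Δx) ⬝ᵥ θh) ^ 2} ∂μ) -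
      Real.sqrt (∫ ω, (y0 ω - x0 ω ⬝ᵥ θh) ^ 2 ∂μ) ≤
      Real.sqrt p * (δtest / δbar) * Real.sqrt (advRiskL2 X y δbar θh) := by
  set g : Ω → ℝ := fun ω => y0 ω - x0 ω ⬝ᵥ θh with hgdef
  set c : ℝ := δtest * l1norm θh with hcdef
  have hc0 : 0 ≤ c := mul_nonneg hδtest.le (l1norm_nonneg θh)
  -- Step 1: LHS ≤ c
  have hLHS : Real.sqrt (∫ ω,
        sSup {v | ∃ Δx : Fin p → ℝ, ‖Δx‖ ≤ δtest ∧ v = (y0 ω - (x0 ω + Δx) ⬝ᵥ θh) ^ 2} ∂μ) -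
      Real.sqrt (∫ ω, (g ω) ^ 2 ∂μ) ≤ c := by
    have hrw : (fun ω => sSup {v | ∃ Δx : Fin p → ℝ, ‖Δx‖ ≤ δtest ∧
        v = (y0 ω - (x0 ω + Δx) ⬝ᵥ θh) ^ 2}) = fun ω => (|g ω| + c) ^ 2 := by
      funext ω; exact sup_eq θh δtest hδtest (x0 ω) (y0 ω)
    rw [hrw]
    set I := ∫ ω, (g ω) ^ 2 ∂μ with hI
    have hI0 : 0 ≤ I := integral_nonneg fun ω => sq_nonneg _
    have habs : ∫ ω, |g ω| ∂μ ≤ Real.sqrt I := int_abs_le_sqrt_int_sq μ g hg hg1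
    have habs0 : 0 ≤ ∫ ω, |g ω| ∂μ := integral_nonneg fun ω => abs_nonneg _
    have hexp : (fun ω => (|g ω| + c) ^ 2)
        = fun ω => (g ω) ^ 2 + 2 * c * |g ω| + c ^ 2 := by
      funext ω; rw [add_sq, sq_abs]; ring
    have int2 : Integrable (fun ω => 2 * c * |g ω|) μ := hg1.const_mul _
    have int1 : Integrable (fun ω => (g ω) ^ 2 + 2 * c * |g ω|) μ := hg.add int2
    rw [hexp, integral_add int1 (integrable_const _), integral_add hg int2,
      integral_const, integral_const_mul]
    simp only [probReal_univ, ENNReal.toReal_one, one_smul]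
    have h1 : I + 2 * c * ∫ ω, |g ω| ∂μ + c ^ 2 ≤ (Real.sqrt I + c) ^ 2 := by
      have : Real.sqrt I ^ 2 = I := Real.sq_sqrt hI0
      nlinarith
    calc Real.sqrt (I + 2 * c * (∫ ω, |g ω| ∂μ) + c ^ 2) - Real.sqrt I
        ≤ Real.sqrt ((Real.sqrt I + c) ^ 2) - Real.sqrt I := by
          have := Real.sqrt_le_sqrt h1; linarith
      _ = c := by rw [Real.sqrt_sq (by positivity)]; ring
  -- Step 2: is αh zero?
  rcases eq_or_ne ‖αh‖ 0 with hα0 | hα0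
  · -- αh = 0 ⇒ y = 0 ⇒ θh = 0
    have hαz : αh = 0 := norm_eq_zero.mp hα0
    have hopt0 : αh ⬝ᵥ y = 0 := by rw [hαz, zero_dotProduct]
    have hle : ∀ v : Fin n → ℝ, v ⬝ᵥ y ≤ 0 := by
      intro v
      set t : ℝ := 1 / (‖v ᵥ* X‖ + 1) with ht
      have hnn : (0:ℝ) ≤ ‖v ᵥ* X‖ := norm_nonneg _
      have ht0 : 0 < t := by positivity
      have hfeas : ‖(t • v) ᵥ* X‖ ≤ 1 := by
        rw [Matrix.smul_vecMul, norm_smul, Real.norm_eq_abs, abs_of_pos ht0, ht,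
          div_mul_eq_mul_div, one_mul, div_le_one (by positivity)]
        linarith
      have := hαh_opt (t • v) hfeas
      rw [hopt0, smul_dotProduct] at this
      have := (smul_nonpos_iff.mp this)
      rcases this with ⟨h1, h2⟩ | ⟨h1, h2⟩
      · exact h2
      · exact absurd h1 (by simp [not_le, ht0])
    have hy : y = 0 := by
      have h1 : y ⬝ᵥ y ≤ 0 := hle y
      have h2 : 0 ≤ y ⬝ᵥ y := by
        rw [dotProduct]
        exact Finset.sum_nonneg fun i _ => mul_self_nonneg _
      exact dotProduct_self_eq_zero.mp (le_antisymm h1 h2)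
    have hθ0 : l1norm θh = 0 := by
      have h1 : l1norm θh ≤ l1norm (0 : Fin p → ℝ) :=
        hθh_opt 0 (by rw [Matrix.mulVec_zero, hy])
      have h2 : l1norm (0 : Fin p → ℝ) = 0 := by simp [l1norm]
      have := l1norm_nonneg θh
      linarith
    have hc : c = 0 := by rw [hcdef, hθ0, mul_zero]
    have hRHS : 0 ≤ Real.sqrt p * (δtest / δbar) * Real.sqrt (advRiskL2 X y δbar θh) := by
      have hδb : 0 ≤ δbar := by rw [hδbar]; positivity
      positivity
    rw [hc] at hLHS
    linarith
  · -- main case : δbar > 0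
    have hαpos : 0 < ‖αh‖ := lt_of_le_of_ne (norm_nonneg _) (Ne.symm hα0)
    have hδb : 0 < δbar := by
      rw [hδbar]
      have hnr : (0:ℝ) < n := by exact_mod_cast hn
      exact div_pos one_pos (mul_pos hnr hαpos)
    have hrow : ∀ i, X i ⬝ᵥ θh = y i := fun i => congrFun hθh_feas i
    have hadv : advRiskL2 X y δbar θh = (δbar * l2norm θh) ^ 2 := by
      rw [advRiskL2]
      have : ∀ i : Fin n, (|y i - X i ⬝ᵥ θh| + δbar * l2norm θh) ^ 2
          = (δbar * l2norm θh) ^ 2 := by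
        intro i; rw [hrow i]; simp
      rw [Finset.sum_congr rfl fun i _ => this i, Finset.sum_const, Finset.card_univ,
        Fintype.card_fin, nsmul_eq_mul]
      have hn' : (n:ℝ) ≠ 0 := Nat.cast_ne_zero.mpr hn.ne'
      field_simp
    have hRHS : Real.sqrt p * (δtest / δbar) * Real.sqrt (advRiskL2 X y δbar θh)
        = Real.sqrt p * δtest * l2norm θh := by
      rw [hadv, Real.sqrt_sq (mul_nonneg hδb.le (l2norm_nonneg θh))]
      field_simp
    rw [hRHS]
    have hmain : c ≤ Real.sqrt p * δtest * l2norm θh := by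
      rw [hcdef]
      have := l1_le_sqrt_mul_l2 θh
      nlinarith [Real.sqrt_nonneg (p:ℝ), l2norm_nonneg θh]
    linarith
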